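/- Let m be a strictly positive integer and let u, v ∈ {0,1}^m be binary vectors with equal Hamming weight |u| = |v| = l, and write supp(u) = {s_1 < s_2 < ⋯ < s_l} and supp(v) = {t_1 < t_2 < ⋯ < t_l}. If s_i ≤ t_i for all 1 ≤ i ≤ l (i.e., u ≼_H v), then Rel(C^u; p) ≤ Rel(C^v; p) for all p ∈ [0,1]. -/

import Mathlib

/-- Reliability of the elementary networks: `g false p = p²` (series),
`g true p = 1 - (1-p)²` (parallel). -/
def g (b : Bool) (p : ℝ) : ℝ := if b then 1 - (1 - p)^2 else p^2

/-- Reliability polynomial of the composition `C^u`,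
`Rel(C^u;p) = (g_{u_1} ∘ ⋯ ∘ g_{u_m})(p)`. -/
def RelC (m : ℕ) (u : Fin m → Bool) (p : ℝ) : ℝ :=
  (List.finRange m).foldr (fun i q => g (u i) q) p

/-- Support of a binary vector. -/
def supp (m : ℕ) (u : Fin m → Bool) : Finset (Fin m) :=
  Finset.univ.filter (fun i => u i = true)

/-- Rank function `ρ(u) = ∑_{i ∈ supp u} i`, with 1-based index values. -/
def rho (m : ℕ) (u : Fin m → Bool) : ℕ :=
  ∑ i ∈ supp m u, ((i : ℕ) + 1)

/-- The support of `u`, sorted increasingly. -/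
def sortedSupp (m : ℕ) (u : Fin m → Bool) : List (Fin m) :=
  Finset.sort (supp m u) (· ≤ ·)

/-- The order `≼_H`: same Hamming weight and `s_i ≤ t_i` for every `i`. -/
def relH (m : ℕ) (u v : Fin m → Bool) : Prop :=
  (supp m u).card = (supp m v).card ∧
    ∀ (i : ℕ) (hu : i < (sortedSupp m u).length) (hv : i < (sortedSupp m v).length),
      (sortedSupp m u).get ⟨i, hu⟩ ≤ (sortedSupp m v).get ⟨i, hv⟩

/-- The order `≼_SH`. -/
def relSH (m : ℕ) (u v : Fin m → Bool) : Prop :=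
  ((supp m u).card ≠ (supp m v).card ∧ supp m u ⊆ supp m v) ∨ relH m u v

/-- The partial order generated by `≼_SH` (reflexive–transitive closure). -/
def leSH (m : ℕ) (u v : Fin m → Bool) : Prop :=
  Relation.ReflTransGen (relSH m) u v


lemma g_mem {p : ℝ} (hp : p ∈ Set.Icc (0:ℝ) 1) (b : Bool) : g b p ∈ Set.Icc (0:ℝ) 1 := by
  obtain ⟨h0, h1⟩ := hp
  rw [Set.mem_Icc]; cases b <;> simp only [g, if_true, if_false, Bool.false_eq_true, Bool.true_eq_false, ite_true, ite_false] <;> constructor <;> nlinarith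

lemma g_mono {p q : ℝ} (hp : p ∈ Set.Icc (0:ℝ) 1) (hq : q ∈ Set.Icc (0:ℝ) 1) (h : p ≤ q) (b : Bool) :
    g b p ≤ g b q := by
  obtain ⟨h0, h1⟩ := hp; obtain ⟨h0', h1'⟩ := hq
  cases b <;> simp only [g, Bool.false_eq_true, ite_true, ite_false] <;> nlinarith

lemma g_key {x : ℝ} (hx : x ∈ Set.Icc (0:ℝ) 1) : g true (g false x) ≤ g false (g true x) := by
  obtain ⟨h0, h1⟩ := hx
  simp only [g, ite_true, Bool.false_eq_true, ite_false]; nlinarith [sq_nonneg (x*(1-x))]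

lemma foldr_mem {m : ℕ} (f : Fin m → Bool) (L : List (Fin m)) {p : ℝ} (hp : p ∈ Set.Icc (0:ℝ) 1) :
    L.foldr (fun i q => g (f i) q) p ∈ Set.Icc (0:ℝ) 1 := by
  induction L with
  | nil => exact hp
  | cons a l ih => exact g_mem ih _

lemma foldr_mono {m : ℕ} (f : Fin m → Bool) (L : List (Fin m)) {p q : ℝ}
    (hp : p ∈ Set.Icc (0:ℝ) 1) (hq : q ∈ Set.Icc (0:ℝ) 1) (h : p ≤ q) :
    L.foldr (fun i q => g (f i) q) p ≤ L.foldr (fun i q => g (f i) q) q := by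
  induction L with
  | nil => exact h
  | cons a l ih => exact g_mono (foldr_mem f l hp) (foldr_mem f l hq) ih _

lemma foldr_congr' {m : ℕ} {f f' : Fin m → Bool} (L : List (Fin m)) (h : ∀ i ∈ L, f i = f' i) (p : ℝ) :
    L.foldr (fun i q => g (f i) q) p = L.foldr (fun i q => g (f' i) q) p := by
  induction L with
  | nil => rfl
  | cons a l ih =>
    simp only [List.foldr_cons, h a (by simp), ih (fun i hi => h i (by simp [hi]))]

lemma swap_le {m : ℕ} (a : ℕ) (ha : a + 1 < m) (u w : Fin m → Bool)
    (hu1 : u ⟨a, Nat.lt_of_succ_lt ha⟩ = true) (hu2 : u ⟨a+1, ha⟩ = false)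
    (hw1 : w ⟨a, Nat.lt_of_succ_lt ha⟩ = false) (hw2 : w ⟨a+1, ha⟩ = true)
    (hagree : ∀ i : Fin m, (i:ℕ) ≠ a → (i:ℕ) ≠ a+1 → u i = w i)
    {p : ℝ} (hp : p ∈ Set.Icc (0:ℝ) 1) : RelC m u p ≤ RelC m w p := by
  set L := List.finRange m with hL
  have hlen : L.length = m := List.length_finRange
  have ha' : a < L.length := by omega
  have ha1' : a + 1 < L.length := by omega
  have hdecomp : L = L.take a ++ ⟨a, Nat.lt_of_succ_lt ha⟩ :: ⟨a+1, ha⟩ :: L.drop (a+2) := by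
    conv_lhs => rw [← List.take_append_drop a L]
    congr 1
    rw [List.drop_eq_getElem_cons ha', List.drop_eq_getElem_cons ha1']
    simp [hL, List.getElem_finRange]
  have htake : ∀ i ∈ L.take a, (i:ℕ) < a := by
    intro i hi
    obtain ⟨t, ht, rfl⟩ := List.getElem_of_mem hi
    rw [List.getElem_take]
    have : t < a := by
      have := ht; simp [List.length_take, hlen] at this; omega
    simp [hL, List.getElem_finRange]; omega
  have hdrop : ∀ i ∈ L.drop (a+2), a + 2 ≤ (i:ℕ) := by
    intro i hi
    obtain ⟨t, ht, rfl⟩ := List.getElem_of_mem hi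
    rw [List.getElem_drop]
    simp [hL, List.getElem_finRange]
  set Fu := fun (i : Fin m) (q : ℝ) => g (u i) q with hFu
  set Fw := fun (i : Fin m) (q : ℝ) => g (w i) q with hFw
  set X := (L.drop (a+2)).foldr Fu p with hX
  have hXw : (L.drop (a+2)).foldr Fw p = X := by
    rw [hX]
    exact (foldr_congr' _ (fun i hi => by
      have := hdrop i hi
      exact hagree i (by omega) (by omega)) p).symm
  have hXmem : X ∈ Set.Icc (0:ℝ) 1 := foldr_mem _ _ hp
  have hru : RelC m u p = (L.take a).foldr Fu (g true (g false X)) := by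
    show L.foldr Fu p = _
    conv_lhs => rw [hdecomp]
    rw [List.foldr_append, List.foldr_cons, List.foldr_cons]
    simp only [hFu, hu1, hu2]
    rfl
  have hrw : RelC m w p = (L.take a).foldr Fw (g false (g true X)) := by
    show L.foldr Fw p = _
    conv_lhs => rw [hdecomp]
    rw [List.foldr_append, List.foldr_cons, List.foldr_cons, hXw]
    simp only [hFw, hw1, hw2]
  rw [hru, hrw]
  have hcongr : (L.take a).foldr Fw (g false (g true X)) = (L.take a).foldr Fu (g false (g true X)) :=
    foldr_congr' _ (fun i hi => by
      have := htake i hi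
      exact (hagree i (by omega) (by omega)).symm) _
  rw [hcongr]
  exact foldr_mono _ _ (g_mem (g_mem hXmem _) _) (g_mem (g_mem hXmem _) _) (g_key hXmem)

def cnt (m : ℕ) (u : Fin m → Bool) (k : ℕ) : ℕ :=
  ∑ i : Fin m, if (i:ℕ) < k ∧ u i = true then 1 else 0

lemma cnt_split {m : ℕ} (u : Fin m → Bool) (a b : ℕ) (hab : a ≤ b) :
    cnt m u b = cnt m u a + ∑ i : Fin m, if a ≤ (i:ℕ) ∧ (i:ℕ) < b ∧ u i = true then 1 else 0 := by
  unfold cnt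
  rw [← Finset.sum_add_distrib]
  apply Finset.sum_congr rfl
  intro i _
  by_cases h : u i = true
  · simp only [h, and_true, eq_self_iff_true]
    split_ifs <;> omega
  · simp [h]

lemma cnt_succ {m : ℕ} (u : Fin m → Bool) (j : Fin m) :
    cnt m u ((j:ℕ)+1) = cnt m u (j:ℕ) + (if u j = true then 1 else 0) := by
  rw [cnt_split u (j:ℕ) ((j:ℕ)+1) (by omega)]
  congr 1
  rw [Finset.sum_eq_single j (fun i _ hij =>
    if_neg (fun ⟨h1, h2, _⟩ => hij (Fin.ext (by omega))))
    (fun h => absurd (Finset.mem_univ j) h)]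
  by_cases h : u j = true <;> simp [h]

lemma cnt_eq_card_filter {m : ℕ} (u : Fin m → Bool) (k : ℕ) :
    cnt m u k = ((supp m u).filter (fun i : Fin m => (i:ℕ) < k)).card := by
  rw [Finset.card_filter]
  unfold supp
  rw [Finset.sum_filter]
  apply Finset.sum_congr rfl
  intro i _
  by_cases h : u i = true <;> simp [h, And.comm]

lemma cnt_total {m : ℕ} (u : Fin m → Bool) : cnt m u m = (supp m u).card := by
  rw [cnt_eq_card_filter]
  congr 1
  exact Finset.filter_true_of_mem (fun i _ => i.isLt)

lemma card_filter_eq_countP {m : ℕ} (s : Finset (Fin m)) (p : Fin m → Prop) [DecidablePred p] :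
    (s.filter p).card = (s.sort (· ≤ ·)).countP (fun i => decide (p i)) := by
  have h1 : (s.filter p).card = Multiset.countP p s.val := by
    rw [Finset.card_filter]
    simp [Multiset.countP_eq_card_filter, Finset.sum_boole]
    rfl
  rw [h1, ← Multiset.coe_toList s.val, Multiset.coe_countP]
  exact (List.Perm.countP_eq _ (Finset.sort_perm_toList (s := s) (· ≤ ·))).symm

lemma cnt_eq_countP {m : ℕ} (u : Fin m → Bool) (k : ℕ) :
    cnt m u k = (sortedSupp m u).countP (fun i : Fin m => decide ((i:ℕ) < k)) := by
  rw [cnt_eq_card_filter, sortedSupp, card_filter_eq_countP]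

lemma countP_le_of_pointwise {m : ℕ} (L1 L2 : List (Fin m)) (hlen : L1.length = L2.length)
    (hpt : ∀ (i:ℕ) (h1 : i < L1.length) (h2 : i < L2.length), L1.get ⟨i,h1⟩ ≤ L2.get ⟨i,h2⟩)
    (k : ℕ) :
    L2.countP (fun i : Fin m => decide ((i:ℕ) < k)) ≤ L1.countP (fun i : Fin m => decide ((i:ℕ) < k)) := by
  induction L1 generalizing L2 with
  | nil =>
    cases L2 with
    | nil => exact le_rfl
    | cons b l2 => simp at hlen
  | cons a l1 ih =>
    cases L2 with
    | nil => simp at hlen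
    | cons b l2 =>
      have hab : (a:ℕ) ≤ (b:ℕ) := hpt 0 (by simp) (by simp)
      have htail := ih l2 (by simpa using hlen)
        (fun i h1 h2 => hpt (i+1) (by simpa using Nat.succ_lt_succ h1) (by simpa using Nat.succ_lt_succ h2))
      have key : (if decide ((b:ℕ) < k) = true then 1 else 0) ≤ (if decide ((a:ℕ) < k) = true then 1 else 0) := by
        by_cases h1 : (b:ℕ) < k
        · have h2 : (a:ℕ) < k := lt_of_le_of_lt hab h1
          simp [h1, h2]
        · rw [if_neg (by simpa using h1)]
          exact Nat.zero_le _
      simp only [List.countP_cons]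
      omega

lemma sum3 {M : Type*} [AddCommMonoid M] {m : ℕ} (f : Fin m → M) (x y : Fin m) (hxy : x ≠ y) :
    ∑ i, f i = f x + (f y + ∑ i ∈ (Finset.univ.erase x).erase y, f i) := by
  rw [← Finset.add_sum_erase _ f (Finset.mem_univ x)]
  congr 1
  rw [← Finset.add_sum_erase _ f (Finset.mem_erase.mpr ⟨hxy.symm, Finset.mem_univ y⟩)]

def rr (m : ℕ) (u : Fin m → Bool) : ℕ :=
  ∑ i : Fin m, (if u i = true then (i:ℕ) else 0)

lemma rr_lt {m : ℕ} (hm : 0 < m) (u : Fin m → Bool) : rr m u < m * m := by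
  obtain ⟨k, rfl⟩ : ∃ k, m = k + 1 := ⟨m - 1, by omega⟩
  have h1 : rr (k+1) u ≤ ∑ _i : Fin (k+1), k := by
    apply Finset.sum_le_sum
    intro i _
    split_ifs
    · have := i.isLt; omega
    · exact Nat.zero_le _
  have h2 : ∑ _i : Fin (k+1), k = (k+1) * k := by
    rw [Finset.sum_const, Finset.card_univ, Fintype.card_fin, smul_eq_mul]
  nlinarith

lemma main_aux (m : ℕ) (hm : 0 < m) :
    ∀ (n : ℕ) (u v : Fin m → Bool), m*m - rr m u ≤ n →
      (∀ k, cnt m v k ≤ cnt m u k) → cnt m u m = cnt m v m →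
      ∀ p ∈ Set.Icc (0:ℝ) 1, RelC m u p ≤ RelC m v p := by
  intro n
  induction n with
  | zero =>
    intro u v hn _ _ _ _
    exact absurd hn (by have := rr_lt hm u; omega)
  | succ n ih =>
    intro u v hn hc hcm p hp
    by_cases huv : u = v
    · rw [huv]
    -- find first disagreement j
    have hD : (Finset.univ.filter (fun i : Fin m => u i ≠ v i)).Nonempty := by
      by_contra h
      refine huv (funext fun i => ?_)
      by_contra hne
      exact h ⟨i, Finset.mem_filter.mpr ⟨Finset.mem_univ i, hne⟩⟩
    set D := Finset.univ.filter (fun i : Fin m => u i ≠ v i) with hDdef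
    set j := D.min' hD with hjdef
    have hjD : j ∈ D := Finset.min'_mem _ _
    have hj : u j ≠ v j := (Finset.mem_filter.mp hjD).2
    have hagree : ∀ i : Fin m, (i:ℕ) < (j:ℕ) → u i = v i := by
      intro i hi
      by_contra hne
      have hle : j ≤ i := Finset.min'_le D i (Finset.mem_filter.mpr ⟨Finset.mem_univ _, hne⟩)
      have := Fin.le_def.mp hle; omega
    have hcj : cnt m u (j:ℕ) = cnt m v (j:ℕ) := by
      unfold cnt
      apply Finset.sum_congr rfl
      intro i _
      by_cases hi : (i:ℕ) < (j:ℕ)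
      · rw [hagree i hi]
      · simp [hi]
    have h1 := hc ((j:ℕ)+1)
    rw [cnt_succ u j, cnt_succ v j, hcj] at h1
    have hujvj : u j = true ∧ v j = false := by
      cases hu : u j <;> cases hv : v j <;> simp [hu, hv] at h1 hj ⊢ <;> omega
    obtain ⟨huj, hvj⟩ := hujvj
    -- first false after j
    have hE : (Finset.univ.filter (fun i : Fin m => (j:ℕ) < (i:ℕ) ∧ u i = false)).Nonempty := by
      by_contra h
      have hall : ∀ i : Fin m, (j:ℕ) < (i:ℕ) → u i = true := by
        intro i hi
        by_contra hne
        exact h ⟨i, Finset.mem_filter.mpr ⟨Finset.mem_univ _, hi, by simpa using hne⟩⟩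
      have e1 := cnt_split u ((j:ℕ)+1) m (by have := j.isLt; omega)
      have e2 := cnt_split v ((j:ℕ)+1) m (by have := j.isLt; omega)
      have hterm : (∑ i : Fin m, if (j:ℕ)+1 ≤ (i:ℕ) ∧ (i:ℕ) < m ∧ v i = true then 1 else 0)
          ≤ ∑ i : Fin m, if (j:ℕ)+1 ≤ (i:ℕ) ∧ (i:ℕ) < m ∧ u i = true then 1 else 0 := by
        apply Finset.sum_le_sum
        intro i _
        by_cases hcond : (j:ℕ)+1 ≤ (i:ℕ) ∧ (i:ℕ) < m ∧ v i = true
        · rw [if_pos hcond,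
            if_pos (show (j:ℕ)+1 ≤ (i:ℕ) ∧ (i:ℕ) < m ∧ u i = true from
              ⟨hcond.1, hcond.2.1, hall i (by omega)⟩)]
        · rw [if_neg hcond]; exact Nat.zero_le _
      have e3 : cnt m u ((j:ℕ)+1) = cnt m v ((j:ℕ)+1) + 1 := by
        rw [cnt_succ u j, cnt_succ v j, hcj, huj, hvj]; simp
      omega
    set E := Finset.univ.filter (fun i : Fin m => (j:ℕ) < (i:ℕ) ∧ u i = false) with hEdef
    set kF := E.min' hE with hkdef
    have hkE : kF ∈ E := Finset.min'_mem _ _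
    rw [Finset.mem_filter] at hkE
    have hjk : (j:ℕ) < (kF:ℕ) := hkE.2.1
    have hukF : u kF = false := hkE.2.2
    have hmid : ∀ i : Fin m, (j:ℕ) ≤ (i:ℕ) → (i:ℕ) < (kF:ℕ) → u i = true := by
      intro i hi1 hi2
      rcases eq_or_lt_of_le hi1 with he | hlt
      · have hij : i = j := Fin.ext he.symm
        rw [hij, huj]
      · by_contra hne
        have hle : kF ≤ i := Finset.min'_le E i
          (Finset.mem_filter.mpr ⟨Finset.mem_univ _, hlt, by simpa using hne⟩)
        have := Fin.le_def.mp hle; omega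
    obtain ⟨a, hak⟩ : ∃ a, a + 1 = (kF:ℕ) := ⟨(kF:ℕ)-1, by omega⟩
    have ha : a + 1 < m := by rw [hak]; exact kF.isLt
    have ha' : a < m := Nat.lt_of_succ_lt ha
    set w : Fin m → Bool := fun i => if (i:ℕ) = a then false else if (i:ℕ) = a+1 then true else u i
      with hwdef
    have hua1 : u ⟨a, ha'⟩ = true := hmid _ (by simp; omega) (by simp; omega)
    have hua : u ⟨a+1, ha⟩ = false := by
      have : (⟨a+1, ha⟩ : Fin m) = kF := Fin.ext hak
      rw [this, hukF]
    have hw1 : w ⟨a, ha'⟩ = false := by simp [hwdef]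
    have hw2 : w ⟨a+1, ha⟩ = true := by simp [hwdef]
    have hagreeW : ∀ i : Fin m, (i:ℕ) ≠ a → (i:ℕ) ≠ a+1 → u i = w i := by
      intro i h1' h2'
      simp [hwdef, h1', h2']
    have hswap : RelC m u p ≤ RelC m w p := swap_le a ha u w hua1 hua hw1 hw2 hagreeW hp
    -- counting relations
    have hxy : (⟨a, ha'⟩ : Fin m) ≠ ⟨a+1, ha⟩ := by simp [Fin.ext_iff]
    have hRcongr : ∀ (f f' : Fin m → ℕ), (∀ i : Fin m, (i:ℕ) ≠ a → (i:ℕ) ≠ a+1 → f i = f' i) →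
        ∑ i ∈ (Finset.univ.erase (⟨a, ha'⟩ : Fin m)).erase ⟨a+1, ha⟩, f i
          = ∑ i ∈ (Finset.univ.erase (⟨a, ha'⟩ : Fin m)).erase ⟨a+1, ha⟩, f' i := by
      intro f f' hff
      apply Finset.sum_congr rfl
      intro i hi
      rw [Finset.mem_erase, Finset.mem_erase] at hi
      exact hff i (fun h => hi.2.1 (Fin.ext h)) (fun h => hi.1 (Fin.ext h))
    have hcnt_swap : ∀ kk, cnt m w kk + (if a < kk then 1 else 0)
        = cnt m u kk + (if a+1 < kk then 1 else 0) := by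
      intro kk
      unfold cnt
      rw [sum3 (fun i : Fin m => if (i:ℕ) < kk ∧ w i = true then 1 else 0) ⟨a, ha'⟩ ⟨a+1, ha⟩ hxy,
        sum3 (fun i : Fin m => if (i:ℕ) < kk ∧ u i = true then 1 else 0) ⟨a, ha'⟩ ⟨a+1, ha⟩ hxy,
        hRcongr (fun i : Fin m => if (i:ℕ) < kk ∧ w i = true then 1 else 0)
          (fun i : Fin m => if (i:ℕ) < kk ∧ u i = true then 1 else 0)
          (fun i h1' h2' => by simp only [← hagreeW i h1' h2'])]
      simp only [hw1, hw2, hua1, hua]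
      simp only [Bool.false_eq_true, and_false, and_true, if_false]
      split_ifs <;> omega
    have hbound : ∀ kk, cnt m v kk ≤ cnt m w kk := by
      intro kk
      have hs := hcnt_swap kk
      by_cases h1' : kk ≤ a
      · rw [if_neg (by omega), if_neg (by omega)] at hs
        have := hc kk; omega
      · by_cases h2' : kk = a + 1
        · rw [if_pos (by omega), if_neg (by omega)] at hs
          have key : cnt m v kk + 1 ≤ cnt m u kk := by
            have e1 := cnt_split u ((j:ℕ)+1) (kF:ℕ) (by omega)
            have e2 := cnt_split v ((j:ℕ)+1) (kF:ℕ) (by omega)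
            have e3 : cnt m u ((j:ℕ)+1) = cnt m v ((j:ℕ)+1) + 1 := by
              rw [cnt_succ u j, cnt_succ v j, hcj, huj, hvj]; simp
            have hterm : (∑ i : Fin m, if (j:ℕ)+1 ≤ (i:ℕ) ∧ (i:ℕ) < (kF:ℕ) ∧ v i = true then 1 else 0)
                ≤ ∑ i : Fin m, if (j:ℕ)+1 ≤ (i:ℕ) ∧ (i:ℕ) < (kF:ℕ) ∧ u i = true then 1 else 0 := by
              apply Finset.sum_le_sum
              intro i _
              by_cases hcond : (j:ℕ)+1 ≤ (i:ℕ) ∧ (i:ℕ) < (kF:ℕ) ∧ v i = true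
              · rw [if_pos hcond,
                  if_pos (show (j:ℕ)+1 ≤ (i:ℕ) ∧ (i:ℕ) < (kF:ℕ) ∧ u i = true from
                    ⟨hcond.1, hcond.2.1, hmid i (by omega) hcond.2.1⟩)]
              · rw [if_neg hcond]; exact Nat.zero_le _
            have hkk : kk = (kF:ℕ) := by omega
            rw [hkk]
            omega
          omega
        · rw [if_pos (by omega), if_pos (by omega)] at hs
          have := hc kk; omega
    have hcmw : cnt m w m = cnt m v m := by
      have hs := hcnt_swap m
      rw [if_pos (by omega), if_pos ha] at hs
      omega
    have hrr : rr m w = rr m u + 1 := by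
      unfold rr
      rw [sum3 (fun i : Fin m => if w i = true then (i:ℕ) else 0) ⟨a, ha'⟩ ⟨a+1, ha⟩ hxy,
        sum3 (fun i : Fin m => if u i = true then (i:ℕ) else 0) ⟨a, ha'⟩ ⟨a+1, ha⟩ hxy,
        hRcongr (fun i : Fin m => if w i = true then (i:ℕ) else 0)
          (fun i : Fin m => if u i = true then (i:ℕ) else 0)
          (fun i h1' h2' => by simp only [← hagreeW i h1' h2'])]
      simp only [hw1, hw2, hua1, hua]
      simp
      omega
    have hmeas : m*m - rr m w ≤ n := by omega
    exact le_trans hswap (ih w v hmeas hbound hcmw p hp)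

/-- if `u ≼_H v` (equal Hamming weight and the `i`-th smallest
element of `supp u` is at most the `i`-th smallest element of `supp v`, for all `i`),
then `Rel(C^u;p) ≤ Rel(C^v;p)` on `[0,1]`. -/
theorem rel_le_of_relH (m : ℕ) (hm : 0 < m) (u v : Fin m → Bool)
    (hcard : (supp m u).card = (supp m v).card)
    (hcoord : ∀ (i : ℕ) (hu : i < (sortedSupp m u).length)
        (hv : i < (sortedSupp m v).length),
        (sortedSupp m u).get ⟨i, hu⟩ ≤ (sortedSupp m v).get ⟨i, hv⟩) :
    ∀ p ∈ Set.Icc (0:ℝ) 1, RelC m u p ≤ RelC m v p := by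
  intro p hp
  have hlu : (sortedSupp m u).length = (supp m u).card := by unfold sortedSupp; exact Finset.length_sort _
  have hlv : (sortedSupp m v).length = (supp m v).card := by unfold sortedSupp; exact Finset.length_sort _
  have hc : ∀ k, cnt m v k ≤ cnt m u k := by
    intro k
    rw [cnt_eq_countP, cnt_eq_countP]
    exact countP_le_of_pointwise _ _ (by rw [hlu, hlv, hcard]) hcoord k
  have hcm : cnt m u m = cnt m v m := by rw [cnt_total, cnt_total, hcard]
  exact main_aux m hm (m*m - rr m u) u v le_rfl hc hcm p hp
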